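/- arXiv:math/0208133 — 3 statements merged into one kernel-verified Lean document; each statement's English description precedes it below -/
import Mathlib

section
/- Let K : ℝ → ℝ be continuous and let u be a C² solution of u'' + K u = 0, not identically zero, having at least 2N distinct zeros t₁ < t₂ < ⋯ < t_{2N}. Then there exist C¹ functions f₁, …, f_N : ℝ → ℝ, each with compact support, with pairwise disjoint supports, and with ∫ (fᵢ')² < ∫ K fᵢ² for each i. (Hence the Morse index of the geodesic is at least N.) -/
open MeasureTheory Set Filter

namespace Stmt11Aux

lemma deriv_eq_zero_of_const_on {f : ℝ → ℝ} {s : Set ℝ} (hs : IsOpen s) {c : ℝ}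
    (hc : ∀ x ∈ s, f x = c) {x : ℝ} (hx : x ∈ s) : deriv f x = 0 := by
  have h : f =ᶠ[nhds x] fun _ => c := Filter.eventuallyEq_of_mem (hs.mem_nhds hx) hc
  rw [h.deriv_eq, deriv_const]

lemma hcs_of {f : ℝ → ℝ} {p q : ℝ} (h : ∀ t, t ∉ Icc p q → f t = 0) :
    HasCompactSupport f :=
  HasCompactSupport.intro isCompact_Icc h

lemma integral_deriv_zero {f : ℝ → ℝ} (hf : ContDiff ℝ 1 f) (h2f : HasCompactSupport f) :
    ∫ x, deriv f x = 0 := by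
  have hint : Integrable (deriv f) :=
    ((hf.continuous_deriv le_rfl).integrable_of_hasCompactSupport h2f.deriv)
  have h1 := h2f.integral_Iic_deriv_eq hf 0
  have h2 := h2f.integral_Ioi_deriv_eq hf 0
  have := MeasureTheory.integral_add_compl (measurableSet_Iic (a := (0:ℝ))) hint
  rw [compl_Iic] at this
  rw [← this, h1, h2]; ring

lemma integral_eq_intervalIntegral {h : ℝ → ℝ} {p q : ℝ} (hpq : p ≤ q)
    (hsupp : ∀ t, t ∉ Set.Ioc p q → h t = 0) :
    ∫ t, h t = ∫ t in p..q, h t := by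
  rw [intervalIntegral.integral_of_le hpq,
    MeasureTheory.setIntegral_eq_integral_of_forall_compl_eq_zero hsupp]

lemma intervalIntegral_zero_of_Ioo {h : ℝ → ℝ} {p q : ℝ} (hpq : p ≤ q)
    (h0 : ∀ t ∈ Ioo p q, h t = 0) : ∫ t in p..q, h t = 0 := by
  rw [intervalIntegral.integral_of_le hpq, MeasureTheory.integral_Ioc_eq_integral_Ioo]
  rw [MeasureTheory.setIntegral_congr_fun measurableSet_Ioo h0]
  simp

set_option maxHeartbeats 1000000 in
lemma key (K u : ℝ → ℝ) (hK : Continuous K) (hu : ContDiff ℝ 2 u)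
    (hJ : ∀ t, deriv (deriv u) t + K t * u t = 0)
    {a b c : ℝ} (hab : a < b) (hbc : b < c) (ha : u a = 0) (hb : u b = 0)
    (hb' : deriv u b ≠ 0) :
    ∃ f : ℝ → ℝ, ContDiff ℝ 1 f ∧ HasCompactSupport f ∧ tsupport f ⊆ Icc a c ∧
      (∫ t, (deriv f t) ^ 2) < ∫ t, K t * (f t) ^ 2 := by
  -- basic regularity of u
  have hud : Differentiable ℝ u := hu.differentiable (by norm_num)
  have hu'cd : ContDiff ℝ 1 (deriv u) :=
    (contDiff_succ_iff_deriv.mp (by exact_mod_cast hu : ContDiff ℝ (1+1) u)).2.2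
  have hu'd : Differentiable ℝ (deriv u) := hu'cd.differentiable (by norm_num)
  have huc : Continuous u := hud.continuous
  have hu'c : Continuous (deriv u) := hu'd.continuous
  have hu''c : Continuous (deriv (deriv u)) := hu'cd.continuous_deriv le_rfl
  have hDu : ∀ t, HasDerivAt u (deriv u t) t := fun t => (hud t).hasDerivAt
  have hDu' : ∀ t, HasDerivAt (deriv u) (deriv (deriv u) t) t := fun t => (hu'd t).hasDerivAt
  -- the smooth transition function
  set g : ℝ → ℝ := Real.smoothTransition with hgdef
  have hgcd : ContDiff ℝ 2 g := Real.smoothTransition.contDiff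
  have hgdiff : Differentiable ℝ g := hgcd.differentiable (by norm_num)
  have hgd : ∀ x, HasDerivAt g (deriv g x) x := fun x => (hgdiff x).hasDerivAt
  have hgc : Continuous (deriv g) := hgcd.continuous_deriv (by norm_num)
  have hg0 : ∀ x : ℝ, x ≤ 0 → g x = 0 := fun x hx => Real.smoothTransition.zero_of_nonpos hx
  have hg1 : ∀ x : ℝ, 1 ≤ x → g x = 1 := fun x hx => Real.smoothTransition.one_of_one_le hx
  have hgnn : ∀ x : ℝ, 0 ≤ g x := Real.smoothTransition.nonneg
  have hgle : ∀ x : ℝ, g x ≤ 1 := Real.smoothTransition.le_one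
  have hg'0 : ∀ x : ℝ, x < 0 ∨ 1 < x → deriv g x = 0 := by
    intro x hx
    rcases hx with hx | hx
    · exact deriv_eq_zero_of_const_on isOpen_Iio (fun y hy => hg0 y (le_of_lt hy)) hx
    · exact deriv_eq_zero_of_const_on isOpen_Ioi (fun y hy => hg1 y (le_of_lt hy)) hx
  obtain ⟨D, hD0, hD⟩ : ∃ D, 0 ≤ D ∧ ∀ x, |deriv g x| ≤ D := by
    obtain ⟨D, hDb⟩ := (isCompact_Icc (a := (0:ℝ)) (b := 1)).exists_bound_of_continuousOn
      (hgc.continuousOn)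
    refine ⟨max D 0, le_max_right _ _, fun x => ?_⟩
    by_cases hx : x ∈ Icc (0:ℝ) 1
    · exact le_trans (by simpa using hDb x hx) (le_max_left _ _)
    · have hx' : x < 0 ∨ 1 < x := by
        simp only [mem_Icc, not_and_or, not_le] at hx
        tauto
      rw [hg'0 x hx']
      simpa using le_max_right D 0
  -- the bump function
  set rO : ℝ := min (b - a) (c - b) / 2 with hrOdef
  have hrO : 0 < rO := by
    have : 0 < min (b - a) (c - b) := lt_min (by linarith) (by linarith)
    positivity
  have hrOba : rO ≤ (b - a) / 2 := by
    have := min_le_left (b - a) (c - b); simp only [hrOdef]; linarith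
  have hrOcb : rO ≤ (c - b) / 2 := by
    have := min_le_right (b - a) (c - b); simp only [hrOdef]; linarith
  set χb : ContDiffBump b := ⟨rO / 2, rO, by positivity, by linarith⟩ with hχdef
  set χ : ℝ → ℝ := fun x => χb x with hχfun
  set p : ℝ := b - rO with hpdef
  set q : ℝ := b + rO with hqdef
  have hap : a < p := by
    simp only [hpdef]; linarith
  have hqc : q ≤ c := by
    simp only [hqdef]; linarith
  have hpb : p < b := by simp only [hpdef]; linarith
  have hbq : b < q := by simp only [hqdef]; linarith
  -- χ regularity
  have hχcd : ContDiff ℝ 2 χ := χb.contDiff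
  have hχdiff : Differentiable ℝ χ := hχcd.differentiable (by norm_num)
  have hχ'cd : ContDiff ℝ 1 (deriv χ) :=
    (contDiff_succ_iff_deriv.mp (by exact_mod_cast hχcd : ContDiff ℝ (1+1) χ)).2.2
  have hχ'diff : Differentiable ℝ (deriv χ) := hχ'cd.differentiable (by norm_num)
  have hχc : Continuous χ := hχdiff.continuous
  have hχ'c : Continuous (deriv χ) := hχ'diff.continuous
  have hχ''c : Continuous (deriv (deriv χ)) := hχ'cd.continuous_deriv le_rfl
  have hDχ : ∀ t, HasDerivAt χ (deriv χ t) t := fun t => (hχdiff t).hasDerivAt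
  have hDχ' : ∀ t, HasDerivAt (deriv χ) (deriv (deriv χ) t) t := fun t => (hχ'diff t).hasDerivAt
  have hχnn : ∀ t, 0 ≤ χ t := fun t => χb.nonneg
  have hχle : ∀ t, χ t ≤ 1 := fun t => χb.le_one
  have hrIn : χb.rIn = rO / 2 := rfl
  have hrOut : χb.rOut = rO := rfl
  have hχone : ∀ t ∈ Icc b (b + rO / 2), χ t = 1 := by
    intro t ht
    apply χb.one_of_mem_closedBall
    rw [Metric.mem_closedBall, Real.dist_eq, hrIn, abs_le]
    constructor
    · linarith [ht.1, hrO]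
    · linarith [ht.2]
  have hχzero : ∀ t, t ≤ p ∨ q ≤ t → χ t = 0 := by
    intro t ht
    apply χb.zero_of_le_dist
    rw [Real.dist_eq, hrOut, le_abs]
    rcases ht with h | h
    · right; simp only [hpdef] at h; linarith
    · left; simp only [hqdef] at h; linarith
  have hχ'zero : ∀ t, t < p ∨ q < t → deriv χ t = 0 := by
    intro t ht
    rcases ht with h | h
    · exact deriv_eq_zero_of_const_on isOpen_Iio
        (fun y hy => hχzero y (Or.inl (le_of_lt hy))) h
    · exact deriv_eq_zero_of_const_on isOpen_Ioi
        (fun y hy => hχzero y (Or.inr (le_of_lt hy))) h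
  have hχ''zero : ∀ t, t < p ∨ q < t → deriv (deriv χ) t = 0 := by
    intro t ht
    rcases ht with h | h
    · exact deriv_eq_zero_of_const_on isOpen_Iio
        (fun y hy => hχ'zero y (Or.inl hy)) h
    · exact deriv_eq_zero_of_const_on isOpen_Ioi
        (fun y hy => hχ'zero y (Or.inr hy)) h
  have hχ'p : deriv χ p = 0 := by
    have hmin : IsLocalMin χ p := Filter.Eventually.of_forall
      (fun y => by rw [hχzero p (Or.inl le_rfl)]; exact hχnn y)
    exact hmin.deriv_eq_zero
  -- constants
  obtain ⟨L, hL0, hL⟩ : ∃ L, 0 ≤ L ∧ ∀ t ∈ Icc (a - 1) (b + 1), |deriv u t| ≤ L := by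
    obtain ⟨L, hLb⟩ := (isCompact_Icc (a := a - 1) (b := b + 1)).exists_bound_of_continuousOn
      hu'c.continuousOn
    refine ⟨max L 0, le_max_right _ _, fun t ht => ?_⟩
    exact le_trans (by simpa using hLb t ht) (le_max_left _ _)
  obtain ⟨M₁, hM₁0, hM₁⟩ : ∃ M₁, 0 ≤ M₁ ∧ ∀ t ∈ Icc b (b + 1),
      |u t * (deriv (deriv χ) t + K t * χ t)| ≤ M₁ := by
    obtain ⟨M, hMb⟩ := (isCompact_Icc (a := b) (b := b + 1)).exists_bound_of_continuousOn
      ((huc.mul (hχ''c.add (hK.mul hχc))).continuousOn)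
    refine ⟨max M 0, le_max_right _ _, fun t ht => ?_⟩
    exact le_trans (by rw [abs_mul]; simpa using hMb t ht) (le_max_left _ _)
  set Qc : ℝ := (∫ t, (deriv χ t) ^ 2) - ∫ t, K t * (χ t) ^ 2 with hQcdef
  set β : ℝ := deriv u b with hβdef
  have hβ2 : 0 < β ^ 2 := by positivity
  set s : ℝ := min 1 (1 / (1 + |Qc|)) with hsdef
  have hs0 : 0 < s := lt_min one_pos (by positivity)
  have hs1 : s ≤ 1 := min_le_left _ _
  have hsQ : s * |Qc| ≤ 1 := by
    have h1 : s ≤ 1 / (1 + |Qc|) := min_le_right _ _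
    have h2 : 0 ≤ |Qc| := abs_nonneg _
    have h3 : 0 < 1 + |Qc| := by linarith
    calc s * |Qc| ≤ (1 / (1 + |Qc|)) * |Qc| := mul_le_mul_of_nonneg_right h1 h2
    _ ≤ 1 := by rw [div_mul_eq_mul_div, one_mul, div_le_one h3]; linarith
  set C₁ : ℝ := 4 * L ^ 2 * D ^ 2 with hC₁def
  have hC₁0 : 0 ≤ C₁ := by positivity
  set A : ℝ := 2 * C₁ + 2 * s * |β| * M₁ with hAdef
  have hA0 : 0 ≤ A := by positivity
  set ε : ℝ := min (min 1 ((b - a) / 2)) (min (rO / 2) (s * β ^ 2 / (A + 1))) with hεdef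
  have hε0 : 0 < ε := by
    apply lt_min (lt_min one_pos (by linarith)) (lt_min (by positivity) (by positivity))
  have hε1 : ε ≤ 1 := le_trans (min_le_left _ _) (min_le_left _ _)
  have hεba : ε ≤ (b - a) / 2 := le_trans (min_le_left _ _) (min_le_right _ _)
  have hεr : ε ≤ rO / 2 := le_trans (min_le_right _ _) (min_le_left _ _)
  have hεA : ε ≤ s * β ^ 2 / (A + 1) := le_trans (min_le_right _ _) (min_le_right _ _)
  have haεb : a + ε ≤ b := by linarith
  have haεp : a + ε ≤ p := by simp only [hpdef]; linarith
  have hbεq : b + ε ≤ q := by simp only [hqdef]; linarith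
  set η : ℝ := -(s * β) with hηdef
  -- the cutoff function φ and its derivative
  set φ : ℝ → ℝ := fun t => g ((t - a) / ε) * g ((b + ε - t) / ε) with hφdef
  set Dφ : ℝ → ℝ := fun t => deriv g ((t - a) / ε) * (1 / ε) * g ((b + ε - t) / ε) +
      g ((t - a) / ε) * (deriv g ((b + ε - t) / ε) * (-(1 / ε))) with hDφdef
  have hφcd : ContDiff ℝ 1 φ := by
    apply ContDiff.mul
    · exact (hgcd.of_le (by norm_num)).comp ((contDiff_id.sub contDiff_const).div_const ε)
    · exact (hgcd.of_le (by norm_num)).comp ((contDiff_const.sub contDiff_id).div_const ε)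
  have hφc : Continuous φ := hφcd.continuous
  have hDφc : Continuous Dφ := by
    apply Continuous.add
    · exact ((hgc.comp (by fun_prop)).mul continuous_const).mul
        (Real.smoothTransition.continuous.comp (by fun_prop))
    · exact (Real.smoothTransition.continuous.comp (by fun_prop)).mul
        ((hgc.comp (by fun_prop)).mul continuous_const)
  have hDφ : ∀ t, HasDerivAt φ (Dφ t) t := by
    intro t
    have h1 : HasDerivAt (fun t : ℝ => (t - a) / ε) (1 / ε) t := by
      simpa using ((hasDerivAt_id t).sub_const a).div_const ε
    have h2 : HasDerivAt (fun t : ℝ => (b + ε - t) / ε) (-(1 / ε)) t := by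
      have h := ((hasDerivAt_const t (b + ε)).sub (hasDerivAt_id t)).div_const ε
      exact h.congr_deriv (by ring)
    have h3 := (hgd ((t - a) / ε)).comp t h1
    have h4 := (hgd ((b + ε - t) / ε)).comp t h2
    have h5 := h3.mul h4
    simp only [hφdef, hDφdef]
    exact h5
  -- φ values
  have hφ0l : ∀ t, t ≤ a → φ t = 0 := by
    intro t ht
    simp only [hφdef]
    rw [hg0 ((t - a) / ε) (by apply div_nonpos_of_nonpos_of_nonneg <;> linarith), zero_mul]
  have hφ0r : ∀ t, b + ε ≤ t → φ t = 0 := by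
    intro t ht
    simp only [hφdef]
    rw [hg0 ((b + ε - t) / ε) (by apply div_nonpos_of_nonpos_of_nonneg <;> linarith), mul_zero]
  have hφ1 : ∀ t, a + ε ≤ t → t ≤ b → φ t = 1 := by
    intro t ht1 ht2
    simp only [hφdef]
    rw [hg1 ((t - a) / ε) (by rw [le_div_iff₀ hε0]; linarith),
      hg1 ((b + ε - t) / ε) (by rw [le_div_iff₀ hε0]; linarith), mul_one]
  have hφnn : ∀ t, 0 ≤ φ t := fun t => mul_nonneg (hgnn _) (hgnn _)
  have hφle : ∀ t, φ t ≤ 1 := by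
    intro t
    simp only [hφdef]
    calc g ((t - a) / ε) * g ((b + ε - t) / ε) ≤ 1 * 1 :=
      mul_le_mul (hgle _) (hgle _) (hgnn _) zero_le_one
    _ = 1 := by ring
  -- Dφ values
  have hDφ0mid : ∀ t ∈ Ioo (a + ε) b, Dφ t = 0 := by
    intro t ht
    simp only [hDφdef]
    rw [hg'0 ((t - a) / ε) (Or.inr (by rw [lt_div_iff₀ hε0]; linarith [ht.1])),
      hg'0 ((b + ε - t) / ε) (Or.inr (by rw [lt_div_iff₀ hε0]; linarith [ht.2]))]
    ring
  have hDφ0out : ∀ t, t < a ∨ b + ε < t → Dφ t = 0 := by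
    intro t ht
    simp only [hDφdef]
    rcases ht with h | h
    · rw [hg'0 ((t - a) / ε) (Or.inl (by apply div_neg_of_neg_of_pos <;> linarith)),
        hg'0 ((b + ε - t) / ε) (Or.inr (by rw [lt_div_iff₀ hε0]; linarith))]
      ring
    · rw [hg'0 ((t - a) / ε) (Or.inr (by rw [lt_div_iff₀ hε0]; linarith)),
        hg'0 ((b + ε - t) / ε) (Or.inl (by apply div_neg_of_neg_of_pos <;> linarith))]
      ring
  have hDφbd : ∀ t, |Dφ t| ≤ 2 * D / ε := by
    intro t
    simp only [hDφdef]
    have e1 : |deriv g ((t - a) / ε) * (1 / ε) * g ((b + ε - t) / ε)| ≤ D / ε := by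
      rw [abs_mul, abs_mul]
      have b1 : |deriv g ((t - a) / ε)| ≤ D := hD _
      have b2 : |(1 : ℝ) / ε| = 1 / ε := abs_of_pos (by positivity)
      have b3 : |g ((b + ε - t) / ε)| ≤ 1 := abs_le.mpr ⟨by linarith [hgnn ((b + ε - t) / ε)], hgle _⟩
      calc |deriv g ((t - a) / ε)| * |(1:ℝ) / ε| * |g ((b + ε - t) / ε)|
          ≤ D * (1 / ε) * 1 := by
            apply mul_le_mul ?_ b3 (abs_nonneg _) (by positivity)
            rw [b2]
            exact mul_le_mul_of_nonneg_right b1 (by positivity)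
      _ = D / ε := by field_simp
    have e2 : |g ((t - a) / ε) * (deriv g ((b + ε - t) / ε) * (-(1 / ε)))| ≤ D / ε := by
      rw [abs_mul, abs_mul]
      have b1 : |deriv g ((b + ε - t) / ε)| ≤ D := hD _
      have b2 : |-(1 / ε)| = 1 / ε := by rw [abs_neg]; exact abs_of_pos (by positivity)
      have b3 : |g ((t - a) / ε)| ≤ 1 := abs_le.mpr ⟨by linarith [hgnn ((t - a) / ε)], hgle _⟩
      calc |g ((t - a) / ε)| * (|deriv g ((b + ε - t) / ε)| * |-(1 / ε)|)
          ≤ 1 * (D * (1 / ε)) := by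
            apply mul_le_mul b3 ?_ (by positivity) zero_le_one
            rw [b2]
            exact mul_le_mul_of_nonneg_right b1 (by positivity)
      _ = D / ε := by field_simp
    calc |deriv g ((t - a) / ε) * (1 / ε) * g ((b + ε - t) / ε) +
          g ((t - a) / ε) * (deriv g ((b + ε - t) / ε) * (-(1 / ε)))| ≤ D / ε + D / ε :=
      le_trans (abs_add_le _ _) (add_le_add e1 e2)
    _ = 2 * D / ε := by ring
  -- MVT bounds for u near a and b
  have hMVT : ∀ x₀, x₀ = a ∨ x₀ = b → u x₀ = 0 → ∀ x ∈ Icc x₀ (x₀ + ε), |u x| ≤ L * ε := by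
    intro x₀ hx₀ hux₀ x hx
    have hsub : Icc x₀ (x₀ + ε) ⊆ Icc (a - 1) (b + 1) := by
      intro y hy
      rcases hx₀ with h | h <;> subst h <;>
        exact ⟨by linarith [hy.1], by linarith [hy.2]⟩
    have hmv := Convex.norm_image_sub_le_of_norm_deriv_le
      (s := Icc (a - 1) (b + 1)) (f := u) (C := L)
      (fun y _ => hud y) (fun y hy => by simpa using hL y hy)
      (convex_Icc _ _) (hsub ⟨le_refl x₀, by linarith⟩) (hsub hx)
    rw [hux₀, sub_zero] at hmv
    calc |u x| ≤ L * ‖x - x₀‖ := hmv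
    _ ≤ L * ε := by
      apply mul_le_mul_of_nonneg_left ?_ hL0
      rw [Real.norm_eq_abs, abs_of_nonneg (by linarith [hx.1])]
      linarith [hx.2]
  -- the test function f
  set f : ℝ → ℝ := fun t => u t * φ t + η * χ t with hfdef
  set Df : ℝ → ℝ := fun t => deriv u t * φ t + u t * Dφ t + η * deriv χ t with hDfdef
  have hDf : ∀ t, HasDerivAt f (Df t) t := by
    intro t
    have h := ((hDu t).mul (hDφ t)).add ((hDχ t).const_mul η)
    simp only [hfdef, hDfdef]
    exact h
  have hderivf : ∀ t, deriv f t = Df t := fun t => (hDf t).deriv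
  have hfcd : ContDiff ℝ 1 f := by
    apply ContDiff.add
    · exact (hu.of_le (by norm_num)).mul hφcd
    · exact contDiff_const.mul (hχcd.of_le (by norm_num))
  have hDfc : Continuous Df := by
    apply Continuous.add
    · exact (hu'c.mul hφc).add (huc.mul hDφc)
    · exact continuous_const.mul hχ'c
  -- zero values outside [a,q]
  have hout : ∀ t, t < a ∨ q < t →
      φ t = 0 ∧ Dφ t = 0 ∧ χ t = 0 ∧ deriv χ t = 0 ∧ deriv (deriv χ) t = 0 := by
    intro t ht
    rcases ht with h | h
    · exact ⟨hφ0l t h.le, hDφ0out t (Or.inl h), hχzero t (Or.inl (by linarith)),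
        hχ'zero t (Or.inl (by linarith)), hχ''zero t (Or.inl (by linarith))⟩
    · exact ⟨hφ0r t (by linarith), hDφ0out t (Or.inr (by linarith)),
        hχzero t (Or.inr (by linarith)), hχ'zero t (Or.inr (by linarith)),
        hχ''zero t (Or.inr (by linarith))⟩
  have mkI : ∀ h : ℝ → ℝ, Continuous h → (∀ t, t < a ∨ q < t → h t = 0) → Integrable h := by
    intro h hc h0
    apply hc.integrable_of_hasCompactSupport
    apply hcs_of (p := a) (q := q)
    intro t ht
    rw [mem_Icc, not_and_or] at ht
    rcases ht with h' | h' <;> [exact h0 t (Or.inl (lt_of_not_ge h'));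
      exact h0 t (Or.inr (lt_of_not_ge h'))]
  have intDf2 : Integrable (fun t => (Df t) ^ 2) := by
    apply mkI _ (by fun_prop) ?_
    intro t ht
    obtain ⟨e1, e2, e3, e4, e5⟩ := hout t ht
    simp only [hDfdef, e1, e2, e4]
    ring
  have intf2 : Integrable (fun t => K t * (f t) ^ 2) := by
    apply mkI _ (by fun_prop) ?_
    intro t ht
    obtain ⟨e1, e2, e3, e4, e5⟩ := hout t ht
    simp only [hfdef, e1, e3]
    ring
  have int1 : Integrable (fun t => (u t) ^ 2 * (Dφ t) ^ 2) := by
    apply mkI _ (by fun_prop) ?_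
    intro t ht
    obtain ⟨e1, e2, e3, e4, e5⟩ := hout t ht
    rw [e2]
    ring
  have int2 : Integrable (fun t => u t * φ t * (deriv (deriv χ) t + K t * χ t)) := by
    apply mkI _ (by fun_prop) ?_
    intro t ht
    obtain ⟨e1, e2, e3, e4, e5⟩ := hout t ht
    rw [e1]
    ring
  have int3 : Integrable (fun t => (deriv χ t) ^ 2) := by
    apply mkI _ (by fun_prop) ?_
    intro t ht
    obtain ⟨e1, e2, e3, e4, e5⟩ := hout t ht
    rw [e4]
    ring
  have int4 : Integrable (fun t => K t * (χ t) ^ 2) := by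
    apply mkI _ (by fun_prop) ?_
    intro t ht
    obtain ⟨e1, e2, e3, e4, e5⟩ := hout t ht
    rw [e3]
    ring
  -- the exact-derivative part G
  set G : ℝ → ℝ := fun t => u t * deriv u t * (φ t) ^ 2 + 2 * η * (u t * φ t * deriv χ t)
    with hGdef
  set DG : ℝ → ℝ := fun t => ((deriv u t) ^ 2 * (φ t) ^ 2 +
      u t * deriv (deriv u) t * (φ t) ^ 2 + 2 * (u t) * (deriv u t) * (φ t) * (Dφ t)) +
      2 * η * (deriv u t * φ t * deriv χ t + u t * Dφ t * deriv χ t +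
        u t * φ t * deriv (deriv χ) t) with hDGdef
  have hDG : ∀ t, HasDerivAt G (DG t) t := by
    intro t
    have h1 : HasDerivAt (fun t => (φ t) ^ 2) (2 * φ t * Dφ t) t := by
      have := (hDφ t).pow 2
      exact this.congr_deriv (by norm_num)
    have h2 := ((hDu t).mul (hDu' t)).mul h1
    have h3 := (((hDu t).mul (hDφ t)).mul (hDχ' t)).const_mul (2 * η)
    have h4 := h2.add h3
    have h5 : HasDerivAt G ((deriv u t * deriv u t + u t * deriv (deriv u) t) * φ t ^ 2 +
        u t * deriv u t * (2 * φ t * Dφ t) +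
        2 * η * ((deriv u t * φ t + u t * Dφ t) * deriv χ t +
          u t * φ t * deriv (deriv χ) t)) t := by
      simp only [hGdef]
      exact h4.congr_deriv (by simp only [Pi.mul_apply])
    convert h5 using 1
    all_goals (simp only [hDGdef]; ring)
  have hGC1 : ContDiff ℝ 1 G := by
    apply ContDiff.add
    · exact ((hu.of_le (by norm_num)).mul hu'cd).mul (hφcd.pow 2)
    · exact contDiff_const.mul (((hu.of_le (by norm_num)).mul hφcd).mul hχ'cd)
  have intDG : Integrable DG := by
    apply mkI _ ?_ ?_
    · simp only [hDGdef]; fun_prop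
    · intro t ht
      obtain ⟨e1, e2, e3, e4, e5⟩ := hout t ht
      simp only [hDGdef, e1, e2, e4, e5]
      ring
  have hintDG : ∫ t, DG t = 0 := by
    have e : DG = deriv G := funext fun t => ((hDG t).deriv).symm
    rw [e]
    apply integral_deriv_zero hGC1
    apply hcs_of (p := a) (q := q)
    intro t ht
    rw [mem_Icc, not_and_or] at ht
    have ht' : t < a ∨ q < t := by
      rcases ht with h' | h' <;> [exact Or.inl (lt_of_not_ge h');
        exact Or.inr (lt_of_not_ge h')]
    obtain ⟨e1, e2, e3, e4, e5⟩ := hout t ht'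
    simp only [hGdef, e1, e4]
    ring
  -- pointwise identity
  have hpt : ∀ t, (Df t) ^ 2 - K t * (f t) ^ 2 = DG t +
      ((u t) ^ 2 * (Dφ t) ^ 2 - 2 * η * (u t * φ t * (deriv (deriv χ) t + K t * χ t)) +
        η ^ 2 * ((deriv χ t) ^ 2 - K t * (χ t) ^ 2)) := by
    intro t
    have e : deriv (deriv u) t = -(K t * u t) := by linarith [hJ t]
    simp only [hDfdef, hfdef, hDGdef, e]
    ring
  -- main integral identity
  have hQtot : (∫ t, (deriv f t) ^ 2) - (∫ t, K t * (f t) ^ 2) =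
      (∫ t, (u t) ^ 2 * (Dφ t) ^ 2) -
      2 * η * (∫ t, u t * φ t * (deriv (deriv χ) t + K t * χ t)) + η ^ 2 * Qc := by
    have e1 : (fun t => (deriv f t) ^ 2) = fun t => (Df t) ^ 2 :=
      funext fun t => by rw [hderivf]
    rw [e1, ← integral_sub intDf2 intf2]
    have e2 : (fun t => (Df t) ^ 2 - K t * f t ^ 2) = fun t => DG t +
        ((u t) ^ 2 * (Dφ t) ^ 2 - 2 * η * (u t * φ t * (deriv (deriv χ) t + K t * χ t)) +
          η ^ 2 * ((deriv χ t) ^ 2 - K t * (χ t) ^ 2)) := funext hpt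
    rw [e2]
    have intC : Integrable (fun t => 2 * η * (u t * φ t * (deriv (deriv χ) t + K t * χ t))) :=
      int2.const_mul (2 * η)
    have intR1 : Integrable (fun t => (u t) ^ 2 * (Dφ t) ^ 2 -
        2 * η * (u t * φ t * (deriv (deriv χ) t + K t * χ t))) := int1.sub intC
    have intR2 : Integrable (fun t => η ^ 2 * ((deriv χ t) ^ 2 - K t * (χ t) ^ 2)) :=
      (int3.sub int4).const_mul (η ^ 2)
    have intR : Integrable (fun t => ((u t) ^ 2 * (Dφ t) ^ 2 -
        2 * η * (u t * φ t * (deriv (deriv χ) t + K t * χ t))) +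
        η ^ 2 * ((deriv χ t) ^ 2 - K t * (χ t) ^ 2)) := intR1.add intR2
    rw [integral_add intDG intR, hintDG, zero_add, integral_add intR1 intR2,
      integral_sub int1 intC, integral_const_mul, integral_const_mul,
      integral_sub int3 int4]
    try simp only [hQcdef]
    try ring
  set T₁ : ℝ := ∫ t, (u t) ^ 2 * (Dφ t) ^ 2 with hT₁def
  set kv : ℝ := ∫ t, u t * φ t * (deriv (deriv χ) t + K t * χ t) with hkvdef
  set rv : ℝ := ∫ t in b..(b + ε), u t * φ t * (deriv (deriv χ) t + K t * χ t) with hrvdef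
  -- bound on T₁
  have hT₁bd : T₁ ≤ 2 * C₁ * ε := by
    have hsupp : ∀ t, t ∉ Ioc a (b + ε) → (u t) ^ 2 * (Dφ t) ^ 2 = 0 := by
      intro t ht
      rw [mem_Ioc, not_and_or] at ht
      rcases ht with h | h
      · have h' : t ≤ a := le_of_not_gt h
        rcases eq_or_lt_of_le h' with h'' | h''
        · rw [h'', ha]; ring
        · rw [hDφ0out t (Or.inl h'')]; ring
      · rw [hDφ0out t (Or.inr (lt_of_not_ge h))]; ring
    have heq : T₁ = ∫ t in a..(b + ε), (u t) ^ 2 * (Dφ t) ^ 2 := by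
      rw [hT₁def]; exact integral_eq_intervalIntegral (by linarith) hsupp
    have hctsI : Continuous (fun t => (u t) ^ 2 * (Dφ t) ^ 2) := by fun_prop
    have i1 := hctsI.intervalIntegrable (μ := volume) a (a + ε)
    have i2 := hctsI.intervalIntegrable (μ := volume) (a + ε) b
    have i3 := hctsI.intervalIntegrable (μ := volume) b (b + ε)
    have i4 := hctsI.intervalIntegrable (μ := volume) a b
    have c1 := intervalIntegral.integral_add_adjacent_intervals (μ := volume) i1 i2
    have c2 := intervalIntegral.integral_add_adjacent_intervals (μ := volume) i4 i3
    have hmid : ∫ t in (a + ε)..b, (u t) ^ 2 * (Dφ t) ^ 2 = 0 :=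
      intervalIntegral_zero_of_Ioo (by linarith)
        (fun t ht => by rw [hDφ0mid t ht]; ring)
    have hend : ∀ x₀, x₀ = a ∨ x₀ = b → u x₀ = 0 →
        |∫ t in x₀..(x₀ + ε), (u t) ^ 2 * (Dφ t) ^ 2| ≤ C₁ * ε := by
      intro x₀ hx₀ hu0
      have hbound : ∀ x ∈ Set.uIoc x₀ (x₀ + ε), ‖(u x) ^ 2 * (Dφ x) ^ 2‖ ≤ 4 * L ^ 2 * D ^ 2 := by
        intro x hx
        rw [Set.uIoc_of_le (by linarith)] at hx
        have h1 : |u x| ≤ L * ε := hMVT x₀ hx₀ hu0 x ⟨hx.1.le, hx.2⟩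
        have h2 : |Dφ x| ≤ 2 * D / ε := hDφbd x
        have h3 : |u x| * |Dφ x| ≤ (L * ε) * (2 * D / ε) :=
          mul_le_mul h1 h2 (abs_nonneg _) (by positivity)
        have e : (L * ε) * (2 * D / ε) = 2 * L * D := by field_simp
        rw [e] at h3
        have e2 : ‖(u x) ^ 2 * (Dφ x) ^ 2‖ = (|u x| * |Dφ x|) ^ 2 := by
          rw [Real.norm_eq_abs, abs_mul, abs_pow, abs_pow]
          ring
        rw [e2]
        calc (|u x| * |Dφ x|) ^ 2 ≤ (2 * L * D) ^ 2 := by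
              apply pow_le_pow_left₀ (by positivity) h3
        _ = 4 * L ^ 2 * D ^ 2 := by ring
      have hn := intervalIntegral.norm_integral_le_of_norm_le_const hbound
      rw [Real.norm_eq_abs] at hn
      calc |∫ t in x₀..(x₀ + ε), (u t) ^ 2 * (Dφ t) ^ 2| ≤ 4 * L ^ 2 * D ^ 2 * |x₀ + ε - x₀| := hn
      _ = C₁ * ε := by
          rw [show x₀ + ε - x₀ = ε by ring, abs_of_pos hε0, hC₁def]
    have hA := hend a (Or.inl rfl) ha
    have hB := hend b (Or.inr rfl) hb
    have hAle := le_trans (le_abs_self _) hA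
    have hBle := le_trans (le_abs_self _) hB
    rw [heq, ← c2, ← c1, hmid]
    linarith
  -- computation of kv
  have hkveq : kv = -β + rv := by
    have hsupp : ∀ t, t ∉ Ioc a q → u t * φ t * (deriv (deriv χ) t + K t * χ t) = 0 := by
      intro t ht
      rw [mem_Ioc, not_and_or] at ht
      rcases ht with h | h
      · rw [hφ0l t (le_of_not_gt h)]; ring
      · obtain ⟨e1, e2, e3, e4, e5⟩ := hout t (Or.inr (lt_of_not_ge h))
        rw [e1]; ring
    have heq : kv = ∫ t in a..q, u t * φ t * (deriv (deriv χ) t + K t * χ t) := by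
      rw [hkvdef]; exact integral_eq_intervalIntegral (by linarith) hsupp
    have hctsI : Continuous (fun t => u t * φ t * (deriv (deriv χ) t + K t * χ t)) := by fun_prop
    have i1 := hctsI.intervalIntegrable (μ := volume) a p
    have i2 := hctsI.intervalIntegrable (μ := volume) p b
    have i3 := hctsI.intervalIntegrable (μ := volume) b (b + ε)
    have i4 := hctsI.intervalIntegrable (μ := volume) (b + ε) q
    have i5 := hctsI.intervalIntegrable (μ := volume) a b
    have i6 := hctsI.intervalIntegrable (μ := volume) b q
    have c1 := intervalIntegral.integral_add_adjacent_intervals (μ := volume) i1 i2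
    have c2 := intervalIntegral.integral_add_adjacent_intervals (μ := volume) i3 i4
    have c3 := intervalIntegral.integral_add_adjacent_intervals (μ := volume) i5 i6
    have h1 : ∫ t in a..p, u t * φ t * (deriv (deriv χ) t + K t * χ t) = 0 :=
      intervalIntegral_zero_of_Ioo hap.le (fun t ht => by
        rw [hχzero t (Or.inl ht.2.le), hχ''zero t (Or.inl ht.2)]; ring)
    have h4 : ∫ t in (b + ε)..q, u t * φ t * (deriv (deriv χ) t + K t * χ t) = 0 :=
      intervalIntegral_zero_of_Ioo (by linarith) (fun t ht => by
        rw [hφ0r t ht.1.le]; ring)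
    have h2 : ∫ t in p..b, u t * φ t * (deriv (deriv χ) t + K t * χ t) = -β := by
      have hEq : EqOn (fun t => u t * φ t * (deriv (deriv χ) t + K t * χ t))
          (fun t => u t * deriv (deriv χ) t - deriv (deriv u) t * χ t) (Set.uIcc p b) := by
        intro t ht
        rw [Set.uIcc_of_le hpb.le] at ht
        have hφt : φ t = 1 := hφ1 t (by linarith [ht.1]) ht.2
        have hJt : K t * u t = -(deriv (deriv u) t) := by linarith [hJ t]
        show u t * φ t * (deriv (deriv χ) t + K t * χ t) =
          u t * deriv (deriv χ) t - deriv (deriv u) t * χ t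
        rw [hφt]
        calc u t * 1 * (deriv (deriv χ) t + K t * χ t)
            = u t * deriv (deriv χ) t + (K t * u t) * χ t := by ring
        _ = u t * deriv (deriv χ) t - deriv (deriv u) t * χ t := by rw [hJt]; ring
      rw [intervalIntegral.integral_congr hEq]
      have hFTC := intervalIntegral.integral_eq_sub_of_hasDerivAt (a := p) (b := b)
        (f := fun t => u t * deriv χ t - deriv u t * χ t)
        (f' := fun t => u t * deriv (deriv χ) t - deriv (deriv u) t * χ t)
        (fun t _ => by
          have hder := ((hDu t).mul (hDχ' t)).sub ((hDu' t).mul (hDχ t))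
          exact hder.congr_deriv (by ring))
        ((by fun_prop : Continuous (fun t => u t * deriv (deriv χ) t -
          deriv (deriv u) t * χ t)).intervalIntegrable _ _)
      rw [hFTC]
      show u b * deriv χ b - deriv u b * χ b - (u p * deriv χ p - deriv u p * χ p) = -β
      rw [hb, hχ'p, hχone b ⟨le_rfl, by linarith⟩, hχzero p (Or.inl le_rfl)]
      simp only [hβdef]
      ring
    rw [heq, ← c3, ← c1, ← c2, h1, h2, h4, ← hrvdef]
    ring
  -- bound on rv
  have hrvbd : |rv| ≤ M₁ * ε := by
    have hbound : ∀ x ∈ Set.uIoc b (b + ε),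
        ‖u x * φ x * (deriv (deriv χ) x + K x * χ x)‖ ≤ M₁ := by
      intro x hx
      rw [Set.uIoc_of_le (by linarith)] at hx
      have h1 : |u x * (deriv (deriv χ) x + K x * χ x)| ≤ M₁ :=
        hM₁ x ⟨hx.1.le, by linarith [hx.2]⟩
      have h2 : |φ x| ≤ 1 := abs_le.mpr ⟨by linarith [hφnn x], hφle x⟩
      rw [Real.norm_eq_abs, show u x * φ x * (deriv (deriv χ) x + K x * χ x) =
        (u x * (deriv (deriv χ) x + K x * χ x)) * φ x from by ring, abs_mul]
      calc |u x * (deriv (deriv χ) x + K x * χ x)| * |φ x| ≤ M₁ * 1 :=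
        mul_le_mul h1 h2 (abs_nonneg _) hM₁0
      _ = M₁ := by ring
    have hn := intervalIntegral.norm_integral_le_of_norm_le_const hbound
    rw [Real.norm_eq_abs] at hn
    calc |rv| ≤ M₁ * |b + ε - b| := hn
    _ = M₁ * ε := by rw [show b + ε - b = ε by ring, abs_of_pos hε0]
  -- final arithmetic
  have hβr : β * rv ≤ |β| * (M₁ * ε) := by
    have k1 : 0 ≤ (|β| - β) * (M₁ * ε + rv) :=
      mul_nonneg (by linarith [le_abs_self β]) (by linarith [(abs_le.mp hrvbd).1])
    have k2 : 0 ≤ (|β| + β) * (M₁ * ε - rv) :=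
      mul_nonneg (by linarith [neg_abs_le β]) (by linarith [(abs_le.mp hrvbd).2])
    linarith [k1, k2]
  have hQcabs : Qc ≤ |Qc| := le_abs_self Qc
  have hεA' : ε * (A + 1) ≤ s * β ^ 2 := by
    rw [← le_div_iff₀ (by positivity : (0:ℝ) < A + 1)]
    exact hεA
  have hεA'' : 2 * C₁ * ε + 2 * s * |β| * M₁ * ε + ε ≤ s * β ^ 2 := by
    have : ε * (A + 1) = 2 * C₁ * ε + 2 * s * |β| * M₁ * ε + ε := by
      rw [hAdef]; ring
    linarith [hεA']
  have h1' : 2 * s * β * rv ≤ 2 * s * |β| * M₁ * ε := by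
    linarith [mul_nonneg hs0.le (sub_nonneg.mpr hβr)]
  have h2' : (s * β) ^ 2 * Qc ≤ s * β ^ 2 := by
    have e1 := mul_le_mul_of_nonneg_left hQcabs (show (0:ℝ) ≤ (s * β) ^ 2 by positivity)
    have e2 := mul_le_mul_of_nonneg_left hsQ (show (0:ℝ) ≤ s * β ^ 2 by positivity)
    have e3 : (s * β) ^ 2 * |Qc| = s * β ^ 2 * (s * |Qc|) := by ring
    have e4 : s * β ^ 2 * 1 = s * β ^ 2 := by ring
    linarith [e1, e2]
  have hfin : T₁ - 2 * η * kv + η ^ 2 * Qc < 0 := by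
    have expand : T₁ - 2 * η * kv + η ^ 2 * Qc =
        T₁ + 2 * s * β * rv - 2 * (s * β ^ 2) + (s * β) ^ 2 * Qc := by
      rw [hηdef, hkveq]; ring
    rw [expand]
    linarith [hT₁bd, h1', h2', hεA'', hε0]
  -- support of f
  have hfsupp : ∀ t, t ∉ Icc a c → f t = 0 := by
    intro t ht
    rw [mem_Icc, not_and_or] at ht
    rcases ht with h | h
    · have h' : t < a := lt_of_not_ge h
      simp only [hfdef, hφ0l t h'.le, hχzero t (Or.inl (by linarith))]
      ring
    · have h' : c < t := lt_of_not_ge h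
      simp only [hfdef, hφ0r t (by linarith), hχzero t (Or.inr (by linarith))]
      ring
  refine ⟨f, hfcd, hcs_of hfsupp, ?_, ?_⟩
  · apply closure_minimal ?_ isClosed_Icc
    intro t ht
    by_contra hmem
    exact ht (hfsupp t hmem)
  · have := hQtot
    linarith [hfin, this]

lemma jacobi_deriv_ne_zero (K u : ℝ → ℝ) (hK : Continuous K) (hu : ContDiff ℝ 2 u)
    (hJ : ∀ t, deriv (deriv u) t + K t * u t = 0) (hne : u ≠ 0)
    {b : ℝ} (hb : u b = 0) : deriv u b ≠ 0 := by
  intro h0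
  apply hne
  have hud : Differentiable ℝ u := hu.differentiable (by norm_num)
  have hu'd : Differentiable ℝ (deriv u) := by
    have := (contDiff_succ_iff_deriv.mp (by exact_mod_cast hu : ContDiff ℝ (1+1) u)).2.2
    exact this.differentiable (by norm_num)
  -- main claim: u vanishes on every closed interval around b
  have main : ∀ T : ℝ, 0 < T → ∀ x ∈ Icc (b - T) (b + T), u x = 0 := by
    intro T hT
    obtain ⟨M, hM⟩ : ∃ M, ∀ t ∈ Icc (b - T) (b + T), |K t| ≤ M := by
      obtain ⟨M, hM⟩ := (isCompact_Icc (a := b - T) (b := b + T)).exists_bound_of_continuousOn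
        (hK.continuousOn (s := Icc (b - T) (b + T)))
      exact ⟨M, fun t ht => by simpa using hM t ht⟩
    have hM0 : 0 ≤ M := le_trans (abs_nonneg _) (hM b ⟨by linarith, by linarith⟩)
    set proj : ℝ → ℝ := fun s => max (-M) (min M (K s)) with hproj
    have hprojle : ∀ s, |proj s| ≤ M := by
      intro s
      rw [abs_le]
      constructor
      · exact le_max_left _ _
      · exact max_le (by linarith) (min_le_left _ _)
    have hprojeq : ∀ s ∈ Icc (b - T) (b + T), proj s = K s := by
      intro s hs
      have := hM s hs
      rw [abs_le] at this
      simp only [hproj]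
      rw [min_eq_right this.2, max_eq_right this.1]
    set F : ℝ → ℝ × ℝ → ℝ × ℝ := fun s x => (x.2, -(proj s) * x.1) with hF
    set L : NNReal := Real.toNNReal (max 1 M) with hL
    have hLc : (L : ℝ) = max 1 M := Real.coe_toNNReal _ (le_trans zero_le_one (le_max_left _ _))
    have hLip : ∀ s, LipschitzWith L (F s) := by
      intro s
      apply LipschitzWith.of_dist_le_mul
      intro x y
      rw [Prod.dist_eq, Prod.dist_eq, hLc]
      simp only [hF, Real.dist_eq]
      have h1 : |x.2 - y.2| ≤ max 1 M * max |x.1 - y.1| |x.2 - y.2| := by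
        calc |x.2 - y.2| ≤ max |x.1 - y.1| |x.2 - y.2| := le_max_right _ _
        _ ≤ max 1 M * max |x.1 - y.1| |x.2 - y.2| := by
            nlinarith [le_max_left (1:ℝ) M, abs_nonneg (x.1 - y.1), abs_nonneg (x.2 - y.2),
              le_max_left |x.1 - y.1| |x.2 - y.2|]
      have h2 : |(-(proj s) * x.1) - (-(proj s) * y.1)| ≤
          max 1 M * max |x.1 - y.1| |x.2 - y.2| := by
        have : (-(proj s) * x.1) - (-(proj s) * y.1) = (-(proj s)) * (x.1 - y.1) := by ring
        rw [this, abs_mul, abs_neg]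
        calc |proj s| * |x.1 - y.1| ≤ M * |x.1 - y.1| :=
              mul_le_mul_of_nonneg_right (hprojle s) (abs_nonneg _)
        _ ≤ max 1 M * max |x.1 - y.1| |x.2 - y.2| := by
            apply mul_le_mul (le_max_right _ _) (le_max_left _ _) (abs_nonneg _)
            exact le_trans hM0 (le_max_right _ _)
      exact max_le h1 h2
    set w : ℝ → ℝ × ℝ := fun s => (u s, deriv u s) with hw
    have hweq : EqOn w (fun _ => ((0 : ℝ), (0 : ℝ))) (Icc (b - T) (b + T)) := by
      apply ODE_solution_unique_of_mem_Icc (v := F) (s := fun _ => univ) (t₀ := b)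
        (fun t _ => (hLip t).lipschitzOnWith) ⟨by linarith, by linarith⟩
      · exact (hud.continuous.prodMk (hu'd.continuous)).continuousOn
      · intro t ht
        have h1 : HasDerivAt u (deriv u t) t := (hud t).hasDerivAt
        have h2 : HasDerivAt (deriv u) (deriv (deriv u) t) t := (hu'd t).hasDerivAt
        have h3 : deriv (deriv u) t = -(proj t) * u t := by
          rw [hprojeq t (Ioo_subset_Icc_self ht)]
          have := hJ t
          linarith
        have h4 : F t (w t) = (deriv u t, deriv (deriv u) t) := by
          simp only [hF, hw, ← h3]
        rw [h4]
        exact h1.prodMk h2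
      · intro t _; trivial
      · exact continuousOn_const
      · intro t ht
        have : F t ((0 : ℝ), (0 : ℝ)) = ((0 : ℝ), (0 : ℝ)) := by
          simp [hF]
        rw [this]
        exact hasDerivAt_const _ _
      · intro t _; trivial
      · simp [hw, hb, h0]
    intro x hx
    have := hweq hx
    simpa [hw] using congrArg Prod.fst this
  funext t
  have hT : (0:ℝ) < |t - b| + 1 := by positivity
  have := main (|t - b| + 1) hT t
    ⟨by have h := neg_abs_le (t - b); linarith, by have h := le_abs_self (t - b); linarith⟩
  simpa using this


end Stmt11Aux

open MeasureTheory

/-- A Jacobi field with at least 2N zeros produces N disjointly supported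
variations on which the index form is negative; hence the Morse index is ≥ N. -/
theorem stmt11 (K u : ℝ → ℝ) (hK : Continuous K) (hu : ContDiff ℝ 2 u)
    (hJ : ∀ t, deriv (deriv u) t + K t * u t = 0) (hne : u ≠ 0)
    (N : ℕ) (z : Fin (2 * N) → ℝ) (hz : StrictMono z) (hzero : ∀ i, u (z i) = 0) :
    ∃ f : Fin N → ℝ → ℝ,
      (∀ i, ContDiff ℝ 1 (f i)) ∧
      (∀ i, HasCompactSupport (f i)) ∧
      (∀ i j, i ≠ j → Disjoint (tsupport (f i)) (tsupport (f j))) ∧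
      (∀ i, (∫ t, (deriv (f i) t) ^ 2) < ∫ t, K t * (f i t) ^ 2) := by
  classical
  have hb' : ∀ t, u t = 0 → deriv u t ≠ 0 := fun t ht =>
    Stmt11Aux.jacobi_deriv_ne_zero K u hK hu hJ hne ht
  have h2i : ∀ i : Fin N, 2 * (i : ℕ) < 2 * N := by
    intro i; have := i.isLt; omega
  have h2i1 : ∀ i : Fin N, 2 * (i : ℕ) + 1 < 2 * N := by
    intro i; have := i.isLt; omega
  set za : Fin N → ℝ := fun i => z ⟨2 * (i : ℕ), h2i i⟩ with hza
  set zb : Fin N → ℝ := fun i => z ⟨2 * (i : ℕ) + 1, h2i1 i⟩ with hzb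
  set zc : Fin N → ℝ := fun i =>
    if h : 2 * (i : ℕ) + 2 < 2 * N then (zb i + z ⟨2 * (i : ℕ) + 2, h⟩) / 2 else zb i + 1
    with hzc
  have hab : ∀ i, za i < zb i := by
    intro i
    exact hz (Fin.mk_lt_mk.mpr (by omega))
  have hmidlt : ∀ (i : Fin N) (h : 2 * (i : ℕ) + 2 < 2 * N), zb i < z ⟨2 * (i : ℕ) + 2, h⟩ := by
    intro i h
    exact hz (Fin.mk_lt_mk.mpr (by omega))
  have hbc : ∀ i, zb i < zc i := by
    intro i
    simp only [hzc]
    by_cases h : 2 * (i : ℕ) + 2 < 2 * N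
    · rw [dif_pos h]; linarith [hmidlt i h]
    · rw [dif_neg h]; linarith
  have hcb2 : ∀ (i : Fin N) (h : 2 * (i : ℕ) + 2 < 2 * N), zc i < z ⟨2 * (i : ℕ) + 2, h⟩ := by
    intro i h
    simp only [hzc]
    rw [dif_pos h]
    linarith [hmidlt i h]
  choose f hf1 hf2 hf3 hf4 using fun i : Fin N =>
    Stmt11Aux.key K u hK hu hJ (hab i) (hbc i) (hzero _) (hzero _) (hb' _ (hzero _))
  refine ⟨f, hf1, hf2, ?_, hf4⟩
  have main : ∀ i j : Fin N, (i : ℕ) < (j : ℕ) →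
      Disjoint (tsupport (f i)) (tsupport (f j)) := by
    intro i j hij
    have hca : zc i < za j := by
      have h2 : 2 * (i : ℕ) + 2 < 2 * N := by have := j.isLt; omega
      have hle : z ⟨2 * (i : ℕ) + 2, h2⟩ ≤ za j := by
        exact hz.monotone (Fin.mk_le_mk.mpr (by omega))
      linarith [hcb2 i h2]
    apply Set.disjoint_of_subset (hf3 i) (hf3 j)
    rw [Set.disjoint_left]
    intro t hti htj
    have h1 := hti.2
    have h2 := htj.1
    linarith
  intro i j hij
  have hne' : (i : ℕ) ≠ (j : ℕ) := fun h => hij (Fin.ext h)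
  rcases lt_or_gt_of_ne hne' with h | h
  · exact main i j h
  · exact (main j i h).symm
end

section
/- Let δ > 0, let f : (−δ, δ) × [0,1] → ℝ, (w, s) ↦ f_w(s), be C¹, and let h : ℝ → ℝ² be C¹. If ∂f_w/∂w(0, s) ≠ 0 for every s ∈ [0,1], then there exists a sequence wᵢ → 0 such that for each i the curve s ↦ (s, f_{wᵢ}(s)) is transverse to h, i.e. for every t ∈ ℝ and every s ∈ [0,1] with h(t) = (s, f_{wᵢ}(s)), the vectors h'(t) and (1, ∂f_{wᵢ}/∂s(s)) are linearly independent in ℝ². -/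
open Set MeasureTheory Filter Asymptotics

/-- 1D mini-Sard: the image of a set on which a function has zero derivative (within the set)
has Lebesgue measure zero. -/
lemma sard1d {φ : ℝ → ℝ} {T : Set ℝ} (hφ : ∀ t ∈ T, HasDerivWithinAt φ 0 T t) :
    volume (φ '' T) = 0 := by
  have := MeasureTheory.addHaar_image_eq_zero_of_det_fderivWithin_eq_zero (volume : Measure ℝ)
    (f := φ) (s := T) (f' := fun _ => ContinuousLinearMap.smulRight (1 : ℝ →L[ℝ] ℝ) (0:ℝ))
    (fun x hx => (hφ x hx).hasFDerivWithinAt) ?_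
  · simpa using this
  · intro x _
    have h0 : ContinuousLinearMap.smulRight (1 : ℝ →L[ℝ] ℝ) (0:ℝ) = 0 := by
      ext; simp
    rw [h0]
    show LinearMap.det ((0 : ℝ →L[ℝ] ℝ) : ℝ →ₗ[ℝ] ℝ) = 0
    simp

set_option maxHeartbeats 4000000 in
/-- Sard-type lemma: if a one-parameter family of graphs moves off itself to first
order, then parameters arbitrarily close to 0 make the graph transverse to a
given C¹ curve h in the plane. -/
theorem stmt13 (δ : ℝ) (hδ : 0 < δ) (f : ℝ × ℝ → ℝ)
    (hf : ContDiffOn ℝ 1 f (Set.Ioo (-δ) δ ×ˢ Set.Icc (0:ℝ) 1))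
    (h : ℝ → ℝ × ℝ) (hh : ContDiff ℝ 1 h)
    (hmove : ∀ s ∈ Set.Icc (0:ℝ) 1, deriv (fun w => f (w, s)) 0 ≠ 0) :
    ∃ w : ℕ → ℝ, (∀ i, w i ∈ Set.Ioo (-δ) δ) ∧
      Filter.Tendsto w Filter.atTop (nhds 0) ∧
      ∀ i, ∀ t : ℝ, ∀ s ∈ Set.Icc (0:ℝ) 1, h t = (s, f (w i, s)) →
        LinearIndependent ℝ ![deriv h t, ((1:ℝ), deriv (fun s' => f (w i, s')) s)] := by
  classical
  set U : Set (ℝ × ℝ) := Set.Ioo (-δ) δ ×ˢ Set.Icc (0:ℝ) 1 with hUdef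
  have hUd : UniqueDiffOn ℝ U := (isOpen_Ioo.uniqueDiffOn).prod (uniqueDiffOn_Icc one_pos)
  have hfd : DifferentiableOn ℝ f U := hf.differentiableOn one_ne_zero
  set D : ℝ × ℝ → (ℝ × ℝ) →L[ℝ] ℝ := fun x => fderivWithin ℝ f U x with hDdef
  have hD : ∀ x ∈ U, HasFDerivWithinAt f (D x) U x := fun x hx =>
    (hfd x hx).hasFDerivWithinAt
  have hDc : ContinuousOn D U := hf.continuousOn_fderivWithin hUd le_rfl
  set p : ℝ × ℝ → ℝ := fun x => D x (1, 0) with hpdef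
  set q : ℝ × ℝ → ℝ := fun x => D x (0, 1) with hqdef
  -- the two partial derivatives
  have h₁mem : ∀ {w s : ℝ}, w ∈ Set.Ioo (-δ) δ → s ∈ Set.Icc (0:ℝ) 1 → ((w, s) : ℝ × ℝ) ∈ U :=
    fun hw hs => Set.mk_mem_prod hw hs
  have hp : ∀ {w s : ℝ}, w ∈ Set.Ioo (-δ) δ → s ∈ Set.Icc (0:ℝ) 1 →
      HasDerivAt (fun w' => f (w', s)) (p (w, s)) w := by
    intro w s hw hs
    have hl : HasDerivAt (fun w' : ℝ => ((w', s) : ℝ × ℝ)) ((1:ℝ), (0:ℝ)) w :=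
      (hasDerivAt_id w).prodMk (hasDerivAt_const w s)
    have := (hD (w, s) (h₁mem hw hs)).comp_hasDerivWithinAt w
      (hl.hasDerivWithinAt (s := Set.Ioo (-δ) δ))
      (fun w' hw' => h₁mem hw' hs)
    exact (this.hasDerivAt (Ioo_mem_nhds hw.1 hw.2))
  have hq : ∀ {w s : ℝ}, w ∈ Set.Ioo (-δ) δ → s ∈ Set.Icc (0:ℝ) 1 →
      HasDerivWithinAt (fun s' => f (w, s')) (q (w, s)) (Set.Icc 0 1) s := by
    intro w s hw hs
    have hl : HasDerivAt (fun s' : ℝ => ((w, s') : ℝ × ℝ)) ((0:ℝ), (1:ℝ)) s :=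
      (hasDerivAt_const s w).prodMk (hasDerivAt_id s)
    exact (hD (w, s) (h₁mem hw hs)).comp_hasDerivWithinAt s
      (hl.hasDerivWithinAt (s := Set.Icc 0 1))
      (fun s' hs' => h₁mem hw hs')
  have h0mem : (0:ℝ) ∈ Set.Ioo (-δ) δ := by constructor <;> linarith
  have hmove' : ∀ s ∈ Set.Icc (0:ℝ) 1, p (0, s) ≠ 0 := by
    intro s hs
    have := (hp h0mem hs).deriv
    rw [← this]
    exact hmove s hs
  have hpc : ContinuousOn p U := hDc.clm_apply continuousOn_const
  -- a uniform lower bound on |p| near w = 0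
  have hc0 : ContinuousOn (fun s : ℝ => |p (0, s)|) (Set.Icc 0 1) := by
    apply ContinuousOn.abs
    apply hpc.comp (Continuous.continuousOn (by continuity))
    intro s hs
    exact h₁mem h0mem hs
  obtain ⟨s₀, hs₀, hmin'⟩ := isCompact_Icc.exists_isMinOn (Set.nonempty_Icc.2 zero_le_one) hc0
  have hmin : ∀ s ∈ Set.Icc (0:ℝ) 1, |p (0, s₀)| ≤ |p (0, s)| := fun s hs => hmin' hs
  set m : ℝ := |p (0, s₀)| with hmdef
  have hm : 0 < m := abs_pos.2 (hmove' s₀ hs₀)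
  set K₀ : Set (ℝ × ℝ) := Set.Icc (-(δ/2)) (δ/2) ×ˢ Set.Icc (0:ℝ) 1 with hK₀def
  have hK₀U : K₀ ⊆ U := Set.prod_mono (Set.Icc_subset_Ioo (by linarith) (by linarith)) le_rfl
  have hK₀c : IsCompact K₀ := isCompact_Icc.prod isCompact_Icc
  set C : Set (ℝ × ℝ) := K₀ ∩ (fun x => |p x|) ⁻¹' Set.Iic (m/2) with hCdef
  have hCc : IsCompact C := by
    apply hK₀c.of_isClosed_subset
    · exact ((hpc.mono hK₀U).abs).preimage_isClosed_of_isClosed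
        (isClosed_Icc.prod isClosed_Icc) isClosed_Iic
    · exact Set.inter_subset_left
  have h0C : (0:ℝ) ∉ Prod.fst '' C := by
    rintro ⟨x, ⟨hxK, hxp⟩, hx0⟩
    have hxs : x.2 ∈ Set.Icc (0:ℝ) 1 := hxK.2
    have : m ≤ |p (0, x.2)| := hmin x.2 hxs
    have hx : ((0:ℝ), x.2) = x := by
      ext
      · exact hx0.symm
      · rfl
    rw [hx] at this
    have : (m/2) < |p x| := by linarith
    exact absurd hxp (not_le.2 this)
  obtain ⟨ε₁, hε₁, hball⟩ : ∃ ε₁ > 0, Metric.ball (0:ℝ) ε₁ ⊆ (Prod.fst '' C)ᶜ := by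
    have : IsOpen (Prod.fst '' C)ᶜ := (hCc.image continuous_fst).isClosed.isOpen_compl
    exact Metric.isOpen_iff.1 this 0 h0C
  set ε : ℝ := min (ε₁/2) (δ/2) with hεdef
  have hε : 0 < ε := lt_min (by linarith) (by linarith)
  have hεδ : ε ≤ δ/2 := min_le_right _ _
  have hεIoo : ∀ {w : ℝ}, |w| ≤ ε → w ∈ Set.Ioo (-δ) δ := by
    intro w hw
    rcases abs_le.1 hw with ⟨hw1, hw2⟩
    constructor <;> linarith [hεδ]
  have hkey : ∀ x : ℝ × ℝ, |x.1| ≤ ε → x.2 ∈ Set.Icc (0:ℝ) 1 → m/2 < |p x| := by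
    intro x hx1 hx2
    by_contra hcon
    push_neg at hcon
    have hxK : x ∈ K₀ := by
      refine ⟨?_, hx2⟩
      rcases abs_le.1 hx1 with ⟨hw1, hw2⟩
      constructor <;> linarith [hεδ]
    have hxC : x ∈ C := ⟨hxK, hcon⟩
    have : x.1 ∈ Metric.ball (0:ℝ) ε₁ := by
      simp only [Metric.mem_ball, Real.dist_eq, sub_zero]
      calc |x.1| ≤ ε := hx1
        _ ≤ ε₁/2 := min_le_left _ _
        _ < ε₁ := by linarith
    exact hball this ⟨x, hxC, rfl⟩
  -- Mean value bound: f is uniformly expanding in the w variable on [-ε, ε]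
  have hMVT : ∀ s ∈ Set.Icc (0:ℝ) 1, ∀ w₁ w₂ : ℝ, |w₁| ≤ ε → |w₂| ≤ ε →
      (m/2) * |w₁ - w₂| ≤ |f (w₁, s) - f (w₂, s)| := by
    have key : ∀ s ∈ Set.Icc (0:ℝ) 1, ∀ w₁ w₂ : ℝ, |w₁| ≤ ε → |w₂| ≤ ε → w₂ < w₁ →
        (m/2) * |w₁ - w₂| ≤ |f (w₁, s) - f (w₂, s)| := by
      intro s hs w₁ w₂ h1 h2 hlt
      have habs : ∀ w ∈ Set.Icc w₂ w₁, |w| ≤ ε := by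
        intro w hw
        rw [abs_le] at h1 h2 ⊢
        exact ⟨by linarith [hw.1, h2.1], by linarith [hw.2, h1.2]⟩
      have hcont : ContinuousOn (fun w => f (w, s)) (Set.Icc w₂ w₁) := by
        intro w hw
        exact ((hp (hεIoo (habs w hw)) hs).continuousAt).continuousWithinAt
      have hderiv : ∀ w ∈ Set.Ioo w₂ w₁, HasDerivAt (fun w => f (w, s)) (p (w, s)) w := by
        intro w hw
        exact hp (hεIoo (habs w (Set.mem_Icc_of_Ioo hw))) hs
      obtain ⟨c, hc, hceq⟩ := exists_hasDerivAt_eq_slope (fun w => f (w, s)) _ hlt hcont hderiv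
      have hcε : |c| ≤ ε := habs c (Set.mem_Icc_of_Ioo hc)
      have hpc2 : m/2 < |p (c, s)| := hkey (c, s) (by simpa using hcε) hs
      have hne : w₁ - w₂ ≠ 0 := sub_ne_zero.2 (ne_of_gt hlt)
      have hmul : p (c, s) * (w₁ - w₂) = f (w₁, s) - f (w₂, s) := (eq_div_iff hne).1 hceq
      rw [← hmul, abs_mul]
      exact mul_le_mul_of_nonneg_right hpc2.le (abs_nonneg _)
    intro s hs w₁ w₂ h1 h2
    rcases lt_trichotomy w₂ w₁ with hlt | heq | hgt
    · exact key s hs w₁ w₂ h1 h2 hlt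
    · simp [heq]
    · have := key s hs w₂ w₁ h2 h1 hgt
      calc (m/2) * |w₁ - w₂| = (m/2) * |w₂ - w₁| := by rw [abs_sub_comm]
        _ ≤ |f (w₂, s) - f (w₁, s)| := this
        _ = |f (w₁, s) - f (w₂, s)| := abs_sub_comm _ _
  have huniq : ∀ s ∈ Set.Icc (0:ℝ) 1, ∀ w₁ w₂ : ℝ, |w₁| ≤ ε → |w₂| ≤ ε →
      f (w₁, s) = f (w₂, s) → w₁ = w₂ := by
    intro s hs w₁ w₂ h1 h2 hfeq
    have hb := hMVT s hs w₁ w₂ h1 h2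
    rw [hfeq, sub_self, abs_zero] at hb
    have h2m : 0 < m / 2 := by linarith
    have hX : |w₁ - w₂| ≤ 0 := by
      by_contra hc
      push_neg at hc
      exact absurd hb (not_le.2 (mul_pos h2m hc))
    exact sub_eq_zero.1 (abs_eq_zero.1 (le_antisymm hX (abs_nonneg _)))
  -- curve components
  have hhd : Differentiable ℝ h := hh.differentiable one_ne_zero
  set h₁ : ℝ → ℝ := fun u => (h u).1 with hh₁def
  set h₂ : ℝ → ℝ := fun u => (h u).2 with hh₂def
  have hd1 : ∀ u, HasDerivAt h₁ ((deriv h u).1) u := fun u =>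
    (ContinuousLinearMap.fst ℝ ℝ ℝ).hasFDerivAt.comp_hasDerivAt u (hhd u).hasDerivAt
  have hd2 : ∀ u, HasDerivAt h₂ ((deriv h u).2) u := fun u =>
    (ContinuousLinearMap.snd ℝ ℝ ℝ).hasFDerivAt.comp_hasDerivAt u (hhd u).hasDerivAt
  have hd1' : ∀ u, deriv h₁ u = (deriv h u).1 := fun u => (hd1 u).deriv
  have hd2' : ∀ u, deriv h₂ u = (deriv h u).2 := fun u => (hd2 u).deriv
  -- the main bad set
  have hmain : ∃ B : Set ℝ, volume B = 0 ∧ ∀ t w, h₁ t ∈ Set.Icc (0:ℝ) 1 → |w| ≤ ε →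
      f (w, h₁ t) = h₂ t → deriv h₁ t * q (w, h₁ t) = deriv h₂ t → w ∈ B := by
    set φ : ℝ → ℝ := fun t =>
      if ht : ∃ w, |w| ≤ ε ∧ f (w, h₁ t) = h₂ t then ht.choose else 0 with hφdef
    set T : Set ℝ := {t | h₁ t ∈ Set.Icc (0:ℝ) 1 ∧ ∃ w, |w| ≤ ε ∧ f (w, h₁ t) = h₂ t ∧
      deriv h₁ t * q (w, h₁ t) = deriv h₂ t} with hTdef
    have hφspec : ∀ t, (∃ w, |w| ≤ ε ∧ f (w, h₁ t) = h₂ t) →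
        |φ t| ≤ ε ∧ f (φ t, h₁ t) = h₂ t := by
      intro t ht
      rw [hφdef]
      simp only [dif_pos ht]
      exact ht.choose_spec
    have huniqφ : ∀ t, h₁ t ∈ Set.Icc (0:ℝ) 1 → ∀ w, |w| ≤ ε → f (w, h₁ t) = h₂ t →
        w = φ t := by
      intro t hti w hw hfw
      obtain ⟨hφε, hφeq⟩ := hφspec t ⟨w, hw, hfw⟩
      exact huniq (h₁ t) hti w (φ t) hw hφε (hfw.trans hφeq.symm)
    have hTprops : ∀ t ∈ T, |φ t| ≤ ε ∧ f (φ t, h₁ t) = h₂ t ∧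
        deriv h₁ t * q (φ t, h₁ t) = deriv h₂ t := by
      intro t ht
      obtain ⟨hti, w, hw, hfw, hdet⟩ := ht
      have hwφ : w = φ t := huniqφ t hti w hw hfw
      obtain ⟨he, hfe⟩ := hφspec t ⟨w, hw, hfw⟩
      exact ⟨he, hfe, hwφ ▸ hdet⟩
    have hTderiv : ∀ t ∈ T, HasDerivWithinAt φ 0 T t := by
      intro t ht
      obtain ⟨hφε, hφeq, hdet⟩ := hTprops t ht
      have hti : h₁ t ∈ Set.Icc (0:ℝ) 1 := ht.1
      have hw₀Ioo : φ t ∈ Set.Ioo (-δ) δ := hεIoo hφε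
      have hA : (fun t' => h₂ t' - h₂ t - (t' - t) • deriv h₂ t) =o[nhds t]
          (fun t' => t' - t) := by
        have := hasDerivAt_iff_isLittleO.1 (hd2 t)
        rwa [hd2' t]
      have hC : (fun t' => h₁ t' - h₁ t - (t' - t) • deriv h₁ t) =o[nhds t]
          (fun t' => t' - t) := by
        have := hasDerivAt_iff_isLittleO.1 (hd1 t)
        rwa [hd1' t]
      have hB0 : (fun s' => f (φ t, s') - f (φ t, h₁ t) - (s' - h₁ t) • q (φ t, h₁ t))
          =o[nhdsWithin (h₁ t) (Set.Icc 0 1)] (fun s' => s' - h₁ t) :=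
        hasDerivWithinAt_iff_isLittleO.1 (hq hw₀Ioo hti)
      have htend : Filter.Tendsto h₁ (nhdsWithin t T) (nhdsWithin (h₁ t) (Set.Icc 0 1)) := by
        apply tendsto_nhdsWithin_of_tendsto_nhds_of_eventually_within
        · exact ((hd1 t).continuousAt).continuousWithinAt
        · exact eventually_mem_nhdsWithin.mono (fun t' ht' => ht'.1)
      have hB1 := hB0.comp_tendsto htend
      have hO : (fun t' => h₁ t' - h₁ t) =O[nhdsWithin t T] (fun t' => t' - t) :=
        ((hd1 t).isBigO_sub).mono nhdsWithin_le_nhds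
      have hB : ((fun s' => f (φ t, s') - f (φ t, h₁ t) - (s' - h₁ t) • q (φ t, h₁ t)) ∘ h₁)
          =o[nhdsWithin t T] (fun t' => t' - t) := hB1.trans_isBigO hO
      have hN : (fun t' => h₂ t' - f (φ t, h₁ t')) =o[nhdsWithin t T] (fun t' => t' - t) := by
        have hsum := ((hA.mono nhdsWithin_le_nhds).sub hB).sub
          ((hC.mono nhdsWithin_le_nhds).const_mul_left (q (φ t, h₁ t)))
        refine hsum.congr (fun t' => ?_) (fun _ => rfl)
        simp only [Function.comp_apply, smul_eq_mul]
        linear_combination hφeq + (t' - t) * hdet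
      have hBigO : (fun t' => φ t' - φ t) =O[nhdsWithin t T]
          (fun t' => h₂ t' - f (φ t, h₁ t')) := by
        rw [Asymptotics.isBigO_iff]
        refine ⟨2/m, ?_⟩
        filter_upwards [self_mem_nhdsWithin] with t' ht'
        obtain ⟨hφε', hφeq', _⟩ := hTprops t' ht'
        have hb := hMVT (h₁ t') ht'.1 (φ t') (φ t) hφε' hφε
        rw [hφeq'] at hb
        rw [Real.norm_eq_abs, Real.norm_eq_abs]
        calc |φ t' - φ t| = (2/m) * (m/2 * |φ t' - φ t|) := by field_simp
          _ ≤ (2/m) * |h₂ t' - f (φ t, h₁ t')| := by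
              have h2m : (0:ℝ) ≤ 2/m := by positivity
              exact mul_le_mul_of_nonneg_left hb h2m
      have := hBigO.trans_isLittleO hN
      rw [hasDerivWithinAt_iff_isLittleO]
      simpa using this
    refine ⟨φ '' T, sard1d hTderiv, ?_⟩
    intro t w hti hw hfw hdet
    exact ⟨t, ⟨hti, w, hw, hfw, hdet⟩, (huniqφ t hti w hw hfw).symm⟩
  -- the endpoint bad sets
  have hend : ∀ c, c ∈ Set.Icc (0:ℝ) 1 → ∃ B : Set ℝ, volume B = 0 ∧ ∀ t w, deriv h₂ t = 0 →
      |w| ≤ ε → f (w, c) = h₂ t → w ∈ B := by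
    intro c hc
    set φ : ℝ → ℝ := fun t =>
      if ht : ∃ w, |w| ≤ ε ∧ f (w, c) = h₂ t then ht.choose else 0 with hφdef
    set T : Set ℝ := {t | deriv h₂ t = 0 ∧ ∃ w, |w| ≤ ε ∧ f (w, c) = h₂ t} with hTdef
    have hφspec : ∀ t, (∃ w, |w| ≤ ε ∧ f (w, c) = h₂ t) →
        |φ t| ≤ ε ∧ f (φ t, c) = h₂ t := by
      intro t ht
      rw [hφdef]
      simp only [dif_pos ht]
      exact ht.choose_spec
    have huniqφ : ∀ t w, |w| ≤ ε → f (w, c) = h₂ t → w = φ t := by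
      intro t w hw hfw
      obtain ⟨hφε, hφeq⟩ := hφspec t ⟨w, hw, hfw⟩
      exact huniq c hc w (φ t) hw hφε (hfw.trans hφeq.symm)
    have hTderiv : ∀ t ∈ T, HasDerivWithinAt φ 0 T t := by
      intro t ht
      obtain ⟨hφε, hφeq⟩ := hφspec t ht.2
      have hN : (fun t' => h₂ t' - h₂ t) =o[nhdsWithin t T] (fun t' => t' - t) := by
        have hA := hasDerivAt_iff_isLittleO.1 (hd2 t)
        rw [(hd2' t).symm.trans ht.1] at hA
        simpa using hA.mono nhdsWithin_le_nhds
      have hBigO : (fun t' => φ t' - φ t) =O[nhdsWithin t T] (fun t' => h₂ t' - h₂ t) := by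
        rw [Asymptotics.isBigO_iff]
        refine ⟨2/m, ?_⟩
        filter_upwards [self_mem_nhdsWithin] with t' ht'
        obtain ⟨hφε', hφeq'⟩ := hφspec t' ht'.2
        have hb := hMVT c hc (φ t') (φ t) hφε' hφε
        rw [hφeq', hφeq] at hb
        rw [Real.norm_eq_abs, Real.norm_eq_abs]
        calc |φ t' - φ t| = (2/m) * (m/2 * |φ t' - φ t|) := by field_simp
          _ ≤ (2/m) * |h₂ t' - h₂ t| := by
              have h2m : (0:ℝ) ≤ 2/m := by positivity
              exact mul_le_mul_of_nonneg_left hb h2m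
      have := hBigO.trans_isLittleO hN
      rw [hasDerivWithinAt_iff_isLittleO]
      simpa using this
    refine ⟨φ '' T, sard1d hTderiv, ?_⟩
    intro t w hd0 hw hfw
    exact ⟨t, ⟨hd0, w, hw, hfw⟩, (huniqφ t w hw hfw).symm⟩
  obtain ⟨B₀, hB₀null, hB₀mem⟩ := hmain
  obtain ⟨B₁, hB₁null, hB₁mem⟩ := hend 0 ⟨le_rfl, zero_le_one⟩
  obtain ⟨B₂, hB₂null, hB₂mem⟩ := hend 1 ⟨zero_le_one, le_rfl⟩
  set Bad : Set ℝ := B₀ ∪ B₁ ∪ B₂ with hBaddef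
  have hBadnull : volume Bad = 0 := by
    rw [hBaddef]
    rw [measure_union_null_iff, measure_union_null_iff]
    exact ⟨⟨hB₀null, hB₁null⟩, hB₂null⟩
  -- selection of good parameters
  have hsel : ∀ η : ℝ, 0 < η → ∃ w : ℝ, |w| < η ∧ |w| ≤ ε ∧ w ∉ Bad := by
    intro η hη
    have hη' : 0 < min η ε := lt_min hη hε
    have hns : ¬ (Set.Ioo (-(min η ε)) (min η ε) ⊆ Bad) := by
      intro hsub
      have := measure_mono_null hsub hBadnull
      rw [Real.volume_Ioo] at this
      rw [ENNReal.ofReal_eq_zero] at this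
      linarith
    obtain ⟨w, hwI, hwB⟩ := Set.not_subset.1 hns
    rw [Set.mem_Ioo] at hwI
    have habs : |w| < min η ε := abs_lt.2 ⟨by linarith [hwI.1], hwI.2⟩
    exact ⟨w, lt_of_lt_of_le habs (min_le_left _ _),
      (lt_of_lt_of_le habs (min_le_right _ _)).le, hwB⟩
  have hpos : ∀ i : ℕ, (0:ℝ) < 1 / (i + 1) := fun i => by positivity
  set w : ℕ → ℝ := fun i => (hsel (1/(i+1)) (hpos i)).choose with hwdef
  have hwspec : ∀ i, |w i| < 1/(i+1) ∧ |w i| ≤ ε ∧ w i ∉ Bad := by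
    intro i
    rw [hwdef]
    exact (hsel (1/(i+1)) (hpos i)).choose_spec
  refine ⟨w, fun i => hεIoo (hwspec i).2.1, ?_, ?_⟩
  · apply squeeze_zero_norm (fun i => (hwspec i).1.le)
    exact tendsto_one_div_add_atTop_nhds_zero_nat
  intro i t s hs heq
  have hwε : |w i| ≤ ε := (hwspec i).2.1
  have hwBad : w i ∉ Bad := (hwspec i).2.2
  have hwIoo : w i ∈ Set.Ioo (-δ) δ := hεIoo hwε
  have h1t : h₁ t = s := congrArg Prod.fst heq
  have h2t : h₂ t = f (w i, s) := congrArg Prod.snd heq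
  -- the q-determinant is nonzero
  have hdetq : deriv h₁ t * q (w i, s) ≠ deriv h₂ t := by
    intro hcon
    apply hwBad
    left; left
    apply hB₀mem t (w i) (h1t ▸ hs) hwε
    · rw [h1t]; exact h2t.symm
    · rw [h1t]; exact hcon
  -- identify the actual derivative in the statement
  have hder : deriv (fun s' => f (w i, s')) s = q (w i, s) ∨
      (deriv (fun s' => f (w i, s')) s = 0 ∧ (s = 0 ∨ s = 1)) := by
    by_cases hdiff : DifferentiableAt ℝ (fun s' => f (w i, s')) s
    · left
      have h1 : HasDerivWithinAt (fun s' => f (w i, s'))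
          (deriv (fun s' => f (w i, s')) s) (Set.Icc 0 1) s :=
        hdiff.hasDerivAt.hasDerivWithinAt
      exact (uniqueDiffOn_Icc one_pos s hs).eq_deriv _ h1 (hq hwIoo hs)
    · right
      refine ⟨deriv_zero_of_not_differentiableAt hdiff, ?_⟩
      by_contra hcon
      push_neg at hcon
      have hsIoo : s ∈ Set.Ioo (0:ℝ) 1 :=
        ⟨lt_of_le_of_ne hs.1 (Ne.symm hcon.1), lt_of_le_of_ne hs.2 hcon.2⟩
      have hUnb : U ∈ nhds ((w i, s) : ℝ × ℝ) := by
        rw [mem_nhds_iff]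
        exact ⟨Set.Ioo (-δ) δ ×ˢ Set.Ioo 0 1,
          Set.prod_mono le_rfl Set.Ioo_subset_Icc_self,
          isOpen_Ioo.prod isOpen_Ioo, Set.mk_mem_prod hwIoo hsIoo⟩
      have hfda : DifferentiableAt ℝ f ((w i, s) : ℝ × ℝ) :=
        ((hf.contDiffAt hUnb).differentiableAt one_ne_zero)
      have hline : DifferentiableAt ℝ (fun s' : ℝ => ((w i, s') : ℝ × ℝ)) s :=
        ((differentiableAt_const _).prodMk differentiableAt_id)
      exact hdiff (hfda.comp s hline)
  -- if s is an endpoint and the derivative is junk, deriv h₂ t ≠ 0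
  have hfinal : deriv h₁ t * deriv (fun s' => f (w i, s')) s ≠ deriv h₂ t := by
    rcases hder with hder | ⟨hder0, hsend⟩
    · rw [hder]; exact hdetq
    · rw [hder0, mul_zero]
      intro hcon
      apply hwBad
      rcases hsend with rfl | rfl
      · left; right
        exact hB₁mem t (w i) hcon.symm hwε h2t.symm
      · right
        exact hB₂mem t (w i) hcon.symm hwε h2t.symm
  -- conclude linear independence
  rw [linearIndependent_fin2]
  constructor
  · simp only [Matrix.cons_val_one, Matrix.head_cons]
    intro hcon
    have : (1:ℝ) = 0 := congrArg Prod.fst hcon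
    exact one_ne_zero this
  · intro a ha
    simp only [Matrix.cons_val_one, Matrix.head_cons, Matrix.cons_val_zero] at ha
    have ha1 : a * 1 = (deriv h t).1 := congrArg Prod.fst ha
    have ha2 : a * deriv (fun s' => f (w i, s')) s = (deriv h t).2 := congrArg Prod.snd ha
    apply hfinal
    rw [hd1' t, hd2' t, ← ha1, ← ha2]
    ring
end

section
/- Let a < b, let C > 0, let u : [a, b] → ℝ be differentiable with |u(t)| < 1 for all t ∈ [a, b], and let g : [a, b] → ℝ satisfy u'(t) = (1 − u(t)²)·g(t) and |g(t)| ≤ C for all t ∈ [a, b]. Then ((1 + u(b))/(1 − u(b))) · ((1 − u(a))/(1 + u(a))) ≤ exp(2C·(b − a)). -/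
/-- Riccati-type estimate: if u' = (1 - u²) g with |g| ≤ C and |u| < 1 on [a,b],
then the logarithmic quantity (1+u)/(1-u) grows at most exponentially. -/
theorem stmt14 (a b C : ℝ) (hab : a < b) (hC : 0 < C)
    (u g : ℝ → ℝ)
    (hu : ∀ t ∈ Set.Icc a b, |u t| < 1)
    (hderiv : ∀ t ∈ Set.Icc a b,
      HasDerivWithinAt u ((1 - (u t) ^ 2) * g t) (Set.Icc a b) t)
    (hg : ∀ t ∈ Set.Icc a b, |g t| ≤ C) :
    ((1 + u b) / (1 - u b)) * ((1 - u a) / (1 + u a)) ≤ Real.exp (2 * C * (b - a)) := by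
  set φ : ℝ → ℝ := fun t => Real.log (1 + u t) - Real.log (1 - u t) with hφ
  have hpos : ∀ t ∈ Set.Icc a b, 0 < 1 + u t ∧ 0 < 1 - u t := by
    intro t ht
    have := abs_lt.mp (hu t ht)
    constructor <;> linarith [this.1, this.2]
  have hφderiv : ∀ t ∈ Set.Icc a b,
      HasDerivWithinAt φ (2 * g t) (Set.Icc a b) t := by
    intro t ht
    have h1 := (hpos t ht).1
    have h2 := (hpos t ht).2
    have d1 : HasDerivWithinAt (fun s => Real.log (1 + u s))
        ((1 - (u t) ^ 2) * g t / (1 + u t)) (Set.Icc a b) t := by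
      have : HasDerivWithinAt (fun s => 1 + u s) ((1 - (u t) ^ 2) * g t)
          (Set.Icc a b) t := (hderiv t ht).const_add 1
      exact this.log h1.ne'
    have d2 : HasDerivWithinAt (fun s => Real.log (1 - u s))
        (-((1 - (u t) ^ 2) * g t) / (1 - u t)) (Set.Icc a b) t := by
      have : HasDerivWithinAt (fun s => 1 - u s) (-((1 - (u t) ^ 2) * g t))
          (Set.Icc a b) t := (hderiv t ht).const_sub 1
      exact this.log h2.ne'
    have := d1.sub d2
    refine this.congr_deriv ?_
    rw [div_sub_div _ _ h1.ne' h2.ne', div_eq_iff (mul_ne_zero h1.ne' h2.ne')]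
    ring
  have hbound : ∀ t ∈ Set.Icc a b, ‖2 * g t‖ ≤ 2 * C := by
    intro t ht
    have := hg t ht
    rw [Real.norm_eq_abs, abs_mul]
    have : |g t| ≤ C := hg t ht
    simp only [abs_two]
    nlinarith
  have key : ‖φ b - φ a‖ ≤ 2 * C * ‖b - a‖ :=
    (convex_Icc a b).norm_image_sub_le_of_norm_hasDerivWithin_le hφderiv hbound
      (Set.left_mem_Icc.mpr hab.le) (Set.right_mem_Icc.mpr hab.le)
  have key2 : φ b - φ a ≤ 2 * C * (b - a) := by
    have hba : ‖b - a‖ = b - a := by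
      rw [Real.norm_eq_abs, abs_of_nonneg (by linarith)]
    calc φ b - φ a ≤ ‖φ b - φ a‖ := le_abs_self _
      _ ≤ 2 * C * ‖b - a‖ := key
      _ = 2 * C * (b - a) := by rw [hba]
  have ha := hpos a (Set.left_mem_Icc.mpr hab.le)
  have hb := hpos b (Set.right_mem_Icc.mpr hab.le)
  have hexp : Real.exp (φ b - φ a)
      = ((1 + u b) / (1 - u b)) * ((1 - u a) / (1 + u a)) := by
    rw [hφ]
    simp only [Real.exp_sub, Real.exp_log ha.1, Real.exp_log ha.2,
      Real.exp_log hb.1, Real.exp_log hb.2]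
    field_simp
  calc ((1 + u b) / (1 - u b)) * ((1 - u a) / (1 + u a))
      = Real.exp (φ b - φ a) := hexp.symm
    _ ≤ Real.exp (2 * C * (b - a)) := Real.exp_le_exp.mpr key2
end
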